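/- Let H be a real separable Hilbert space, T > 0, α ∈ (0, 1/2), and m a positive integer with m > 1/(2α). Let S : [0,∞) → L(H) be strongly continuous (t ↦ S(t)x is continuous for every x ∈ H) and satisfy ‖S(t)‖_{L(H)} ≤ M·e^{at} for some constants M ≥ 1 and a ∈ ℝ. Then for every y ∈ L^{2m}([0,T]; H), the Bochner integral z(t) := ∫_0^t (t−s)^{α−1} S(t−s) y(s) ds is well defined for every t ∈ [0,T], and the function z : [0,T] → H is continuous. -/

import Mathlib

open MeasureTheory Real Filter
open scoped ENNReal NNReal Topology

section Aux

/-- A power function is integrable on `Ioc 0 T` when the exponent is `> -1`. -/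
lemma aux_kernelInt {β T : ℝ} (hβ : -1 < β) (hT : 0 ≤ T) :
    IntegrableOn (fun u : ℝ => u ^ β) (Set.Ioc (0 : ℝ) T) volume := by
  have h := intervalIntegral.intervalIntegrable_rpow' (a := 0) (b := T) hβ
  rwa [intervalIntegrable_iff, Set.uIoc_of_le hT] at h

/-- A strongly continuous, locally bounded family of operators is jointly continuous. -/
lemma aux_joint_cont {H : Type*} [NormedAddCommGroup H] [NormedSpace ℝ H]
    (S : ℝ → H →L[ℝ] H) (hc : ∀ x : H, Continuous fun u => S u x)
    (hb : ∀ r : ℝ, ∃ L : ℝ, 0 < L ∧ ∀ u ∈ Set.Icc (r - 1) (r + 1), ‖S u‖ ≤ L) :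
    Continuous fun p : ℝ × H => S p.1 p.2 := by
  rw [continuous_iff_continuousAt]
  rintro ⟨u₀, x₀⟩
  rw [Metric.continuousAt_iff]
  intro ε hε
  obtain ⟨L, hL0, hL⟩ := hb u₀
  obtain ⟨δ₁, hδ₁0, hδ₁⟩ := Metric.continuous_iff.1 (hc x₀) u₀ (ε / 2) (by linarith)
  refine ⟨min 1 (min δ₁ (ε / (2 * L))), by positivity, ?_⟩
  rintro ⟨u, x⟩ hd
  have hdeq : dist ((u, x) : ℝ × H) (u₀, x₀) = max (dist u u₀) (dist x x₀) := Prod.dist_eq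
  have hdu : dist u u₀ < min 1 (min δ₁ (ε / (2 * L))) :=
    lt_of_le_of_lt (le_trans (le_max_left _ _) hdeq.ge) hd
  have hdx : dist x x₀ < min 1 (min δ₁ (ε / (2 * L))) :=
    lt_of_le_of_lt (le_trans (le_max_right _ _) hdeq.ge) hd
  have hu1 : dist u u₀ < 1 := lt_of_lt_of_le hdu (min_le_left _ _)
  have huδ₁ : dist u u₀ < δ₁ :=
    lt_of_lt_of_le hdu (le_trans (min_le_right _ _) (min_le_left _ _))
  have hxε : dist x x₀ < ε / (2 * L) :=
    lt_of_lt_of_le hdx (le_trans (min_le_right _ _) (min_le_right _ _))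
  have huL : ‖S u‖ ≤ L := by
    apply hL
    rw [Real.dist_eq, abs_lt] at hu1
    constructor <;> linarith [hu1.1, hu1.2]
  calc dist (S u x) (S u₀ x₀)
      ≤ dist (S u x) (S u x₀) + dist (S u x₀) (S u₀ x₀) := dist_triangle _ _ _
    _ < ε / 2 + ε / 2 := by
        apply add_lt_add_of_le_of_lt _ (hδ₁ u huδ₁)
        · rw [dist_eq_norm, ← map_sub]
          calc ‖S u (x - x₀)‖ ≤ ‖S u‖ * ‖x - x₀‖ := (S u).le_opNorm _
            _ ≤ L * ‖x - x₀‖ := by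
                apply mul_le_mul_of_nonneg_right huL (norm_nonneg _)
            _ ≤ L * (ε / (2 * L)) := by
                apply mul_le_mul_of_nonneg_left _ hL0.le
                rw [← dist_eq_norm]; exact hxε.le
            _ = ε / 2 := by field_simp
    _ = ε := by ring

end Aux

/-- let `S` be a strongly continuous family of bounded operators on a real
separable Hilbert space `H` with `‖S(t)‖ ≤ M·e^{at}`, let `T > 0`, `α ∈ (0,1/2)` and `m` a
positive integer with `m > 1/(2α)`.  Then for every `y ∈ L^{2m}([0,T]; H)` the Bochner
integral `z(t) = ∫_0^t (t−s)^{α−1} S(t−s) y(s) ds` is well defined for every `t ∈ [0,T]`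
and `z` is continuous on `[0,T]`. -/
theorem factorization_integral_continuous
    {H : Type*} [NormedAddCommGroup H] [InnerProductSpace ℝ H] [CompleteSpace H]
    [SecondCountableTopology H]
    (T : ℝ) (hT : 0 < T)
    (α : ℝ) (hα0 : 0 < α) (hα1 : α < 1 / 2)
    (m : ℕ) (hm : 0 < m) (hmα : 1 / (2 * α) < (m : ℝ))
    (S : ℝ → H →L[ℝ] H)
    (hScont : ∀ x : H, ContinuousOn (fun t => S t x) (Set.Ici (0 : ℝ)))
    (M a : ℝ) (hM : 1 ≤ M)
    (hSbound : ∀ t : ℝ, 0 ≤ t → ‖S t‖ ≤ M * Real.exp (a * t))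
    (y : ℝ → H)
    (hymeas : AEStronglyMeasurable y (volume.restrict (Set.Ioc (0 : ℝ) T)))
    (hyLp : ∫⁻ s in Set.Ioc (0 : ℝ) T, (‖y s‖₊ : ENNReal) ^ (2 * m) ≠ ⊤) :
    (∀ t ∈ Set.Icc (0 : ℝ) T,
        IntegrableOn (fun s : ℝ => ((t - s) ^ (α - 1) : ℝ) • S (t - s) (y s))
          (Set.Ioc (0 : ℝ) t) volume) ∧
      ContinuousOn
        (fun t : ℝ => ∫ s in Set.Ioc (0 : ℝ) t, ((t - s) ^ (α - 1) : ℝ) • S (t - s) (y s))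
        (Set.Icc (0 : ℝ) T) := by
  classical
  have hm1 : (1 : ℝ) ≤ m := by exact_mod_cast hm
  -- real exponents
  set pr : ℝ := 2 * m with hpr_def
  have hpr2 : 2 ≤ pr := by rw [hpr_def]; linarith
  have hpr0 : 0 < pr := by linarith
  set qr : ℝ := pr / (pr - 1) with hqr_def
  have hqr0 : 0 < qr := div_pos (by linarith) (by linarith)
  have hconj : 1 / qr + 1 / pr = 1 := by
    rw [hqr_def]
    have h1 : pr - 1 ≠ 0 := by linarith
    have h2 : pr ≠ 0 := by linarith
    field_simp
    ring
  have hαpr : 1 < α * pr := by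
    have h2α : 0 < 2 * α := by linarith
    have := (div_lt_iff₀ h2α).1 hmα
    rw [hpr_def]; nlinarith
  have hβα : (-1 : ℝ) < (α - 1) * qr := by
    have h1 : (0:ℝ) < pr - 1 := by linarith
    rw [hqr_def, show (α - 1) * (pr / (pr - 1)) = ((α - 1) * pr) / (pr - 1) by ring,
      lt_div_iff₀ h1]
    nlinarith
  -- extended exponents
  set p : ℝ≥0∞ := ENNReal.ofReal pr with hp_def
  set q : ℝ≥0∞ := ENNReal.ofReal qr with hq_def
  have hp0 : p ≠ 0 := by simp [hp_def, ENNReal.ofReal_eq_zero, not_le, hpr0]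
  have hptop : p ≠ ⊤ := ENNReal.ofReal_ne_top
  have hq0 : q ≠ 0 := by simp [hq_def, ENNReal.ofReal_eq_zero, not_le, hqr0]
  have hqtop : q ≠ ⊤ := ENNReal.ofReal_ne_top
  have hp_toReal : p.toReal = pr := ENNReal.toReal_ofReal hpr0.le
  have hq_toReal : q.toReal = qr := ENNReal.toReal_ofReal hqr0.le
  have hpq1 : 1 / (1 : ℝ≥0∞) = 1 / q + 1 / p := by
    rw [hp_def, hq_def, one_div, one_div, one_div, ← ENNReal.ofReal_inv_of_pos hqr0,
      ← ENNReal.ofReal_inv_of_pos hpr0, ← ENNReal.ofReal_add (by positivity) (by positivity),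
      inv_one]
    rw [show qr⁻¹ + pr⁻¹ = 1 by rw [← hconj]; ring, ENNReal.ofReal_one]
  -- the extended semigroup
  set S' : ℝ → H →L[ℝ] H := fun u => S (max u 0) with hS'_def
  have hS'c : ∀ x : H, Continuous fun u => S' u x := by
    intro x
    exact (hScont x).comp_continuous (continuous_id.max continuous_const)
      (fun u => Set.mem_Ici.2 (le_max_right _ _))
  set K : ℝ := M * Real.exp (|a| * T) with hK_def
  have hK0 : 0 < K := by positivity
  have hS'b : ∀ u : ℝ, u ≤ T → ‖S' u‖ ≤ K := by
    intro u hu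
    have h0 : 0 ≤ max u 0 := le_max_right _ _
    have h1 : max u 0 ≤ T := max_le hu hT.le
    refine (hSbound _ h0).trans ?_
    apply mul_le_mul_of_nonneg_left _ (by linarith : (0:ℝ) ≤ M)
    apply Real.exp_le_exp.2
    calc a * max u 0 ≤ |a| * max u 0 := by
          apply mul_le_mul_of_nonneg_right (le_abs_self a) h0
      _ ≤ |a| * T := by apply mul_le_mul_of_nonneg_left h1 (abs_nonneg a)
  have hΦ : Continuous fun pp : ℝ × H => S' pp.1 pp.2 := by
    apply aux_joint_cont S' hS'c
    intro r
    refine ⟨M * Real.exp (|a| * (|r| + 1)), by positivity, ?_⟩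
    rintro u ⟨hu1, hu2⟩
    have h0 : 0 ≤ max u 0 := le_max_right _ _
    have h1 : max u 0 ≤ |r| + 1 := by
      apply max_le _ (by positivity)
      calc u ≤ r + 1 := hu2
        _ ≤ |r| + 1 := by linarith [le_abs_self r]
    refine (hSbound _ h0).trans ?_
    apply mul_le_mul_of_nonneg_left _ (by linarith : (0:ℝ) ≤ M)
    apply Real.exp_le_exp.2
    calc a * max u 0 ≤ |a| * max u 0 := mul_le_mul_of_nonneg_right (le_abs_self a) h0
      _ ≤ |a| * (|r| + 1) := mul_le_mul_of_nonneg_left h1 (abs_nonneg a)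
  -- measures
  set μT : Measure ℝ := volume.restrict (Set.Ioc (0 : ℝ) T) with hμT_def
  -- the kernel constant
  set Bq : ℝ≥0∞ := eLpNorm (fun u : ℝ => u ^ (α - 1)) q μT with hBq_def
  have hptwise : ∀ u : ℝ, 0 < u →
      ‖u ^ (α - 1)‖ₑ ^ qr = ENNReal.ofReal (u ^ ((α - 1) * qr)) := by
    intro u hu
    have h1 : (0:ℝ) ≤ u ^ (α - 1) := Real.rpow_nonneg hu.le _
    rw [Real.enorm_eq_ofReal h1, ENNReal.ofReal_rpow_of_nonneg h1 hqr0.le,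
      ← Real.rpow_mul hu.le]
  have hBq_top : Bq ≠ ⊤ := by
    rw [hBq_def, eLpNorm_eq_lintegral_rpow_enorm_toReal hq0 hqtop, hq_toReal]
    refine ENNReal.rpow_ne_top_of_nonneg (by positivity) ?_
    have hint : IntegrableOn (fun u : ℝ => u ^ ((α - 1) * qr)) (Set.Ioc (0:ℝ) T) volume :=
      aux_kernelInt hβα hT.le
    have hfin := (hasFiniteIntegral_iff_ofReal ?_).1 hint.2
    · rw [hμT_def, setLIntegral_congr_fun measurableSet_Ioc
        (fun u hu => hptwise u hu.1)]
      exact hfin.ne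
    · rw [EventuallyLE, ae_restrict_iff' measurableSet_Ioc]
      exact Filter.Eventually.of_forall fun u hu => Real.rpow_nonneg hu.1.le _
  -- kernel transfer
  have hker : ∀ t ∈ Set.Icc (0:ℝ) T,
      eLpNorm (fun s : ℝ => (t - s) ^ (α - 1)) q (volume.restrict (Set.Ioc (0:ℝ) t)) ≤ Bq := by
    intro t ht
    rw [hBq_def, eLpNorm_eq_lintegral_rpow_enorm_toReal hq0 hqtop,
      eLpNorm_eq_lintegral_rpow_enorm_toReal hq0 hqtop, hq_toReal]
    apply ENNReal.rpow_le_rpow _ (by positivity)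
    set G : ℝ → ℝ≥0∞ := fun u => ((‖u ^ (α - 1)‖₊ : ℝ≥0∞)) ^ qr with hG_def
    have hpre : (fun s : ℝ => t - s) ⁻¹' (Set.Ico 0 t) = Set.Ioc 0 t := by
      ext s
      simp only [Set.mem_preimage, Set.mem_Ico, Set.mem_Ioc]
      constructor
      · rintro ⟨h1, h2⟩; constructor <;> linarith
      · rintro ⟨h1, h2⟩; constructor <;> linarith
    have hmp : MeasurePreserving (fun s : ℝ => t - s) volume volume :=
      Measure.measurePreserving_sub_left volume t
    have hemb : MeasurableEmbedding (fun s : ℝ => t - s) :=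
      (MeasurableEquiv.subLeft t).measurableEmbedding
    have h1 : ∫⁻ s in Set.Ioc (0:ℝ) t, G (t - s) = ∫⁻ u in Set.Ico (0:ℝ) t, G u := by
      rw [← hpre]; exact hmp.setLIntegral_comp_preimage_emb hemb G _
    have h2 : ∫⁻ u in Set.Ico (0:ℝ) t, G u = ∫⁻ u in Set.Ioc (0:ℝ) t, G u := by
      rw [Measure.restrict_congr_set Ico_ae_eq_Ioc]
    calc ∫⁻ s in Set.Ioc (0:ℝ) t, G (t - s) = ∫⁻ u in Set.Ioc (0:ℝ) t, G u := by rw [h1, h2]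
      _ ≤ ∫⁻ u in Set.Ioc (0:ℝ) T, G u :=
          lintegral_mono' (Measure.restrict_mono (Set.Ioc_subset_Ioc_right ht.2) le_rfl) le_rfl
  -- Key lemma A: integrability and uniform bound
  have keyA : ∀ f : ℝ → H, AEStronglyMeasurable f μT → eLpNorm f p μT ≠ ⊤ →
      ∀ t ∈ Set.Icc (0:ℝ) T,
        IntegrableOn (fun s : ℝ => ((t - s) ^ (α - 1) : ℝ) • S' (t - s) (f s))
          (Set.Ioc (0 : ℝ) t) volume ∧
        ‖∫ s in Set.Ioc (0 : ℝ) t, ((t - s) ^ (α - 1) : ℝ) • S' (t - s) (f s)‖ ≤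
          (Bq * (ENNReal.ofReal K * eLpNorm f p μT)).toReal := by
    intro f hfm hfp t ht
    have hsub : Set.Ioc (0:ℝ) t ⊆ Set.Ioc (0:ℝ) T := Set.Ioc_subset_Ioc_right ht.2
    set μt : Measure ℝ := volume.restrict (Set.Ioc (0:ℝ) t) with hμt_def
    have hμt : μt = μT.restrict (Set.Ioc (0:ℝ) t) := by
      rw [hμt_def, hμT_def, Measure.restrict_restrict measurableSet_Ioc,
        Set.inter_eq_self_of_subset_left hsub]
    have hμt_le : μt ≤ μT := by
      rw [hμt_def, hμT_def]; exact Measure.restrict_mono hsub le_rfl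
    have hfm_t : AEStronglyMeasurable f μt := by rw [hμt]; exact hfm.restrict
    set g : ℝ → H := fun s => S' (t - s) (f s) with hg_def
    have hgm : AEStronglyMeasurable g μt := by
      have h1 : AEStronglyMeasurable (fun s : ℝ => ((t - s : ℝ), f s)) μt :=
        ((continuous_const.sub continuous_id).aestronglyMeasurable).prodMk hfm_t
      exact hΦ.comp_aestronglyMeasurable h1
    have hg_le : ∀ᵐ s ∂μt, ‖g s‖ ≤ ‖(K • f) s‖ := by
      rw [hμt_def, ae_restrict_iff' measurableSet_Ioc]
      refine Filter.Eventually.of_forall fun s hs => ?_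
      have hts : t - s ≤ T := by
        have := hs.1; have := ht.2; linarith
      calc ‖S' (t - s) (f s)‖ ≤ ‖S' (t - s)‖ * ‖f s‖ := (S' (t - s)).le_opNorm _
        _ ≤ K * ‖f s‖ := mul_le_mul_of_nonneg_right (hS'b _ hts) (norm_nonneg _)
        _ = ‖(K • f) s‖ := by
            simp [norm_smul, abs_of_pos hK0]
    have hg_p : eLpNorm g p μt ≤ ENNReal.ofReal K * eLpNorm f p μT := by
      refine (eLpNorm_mono_ae hg_le).trans ?_
      rw [eLpNorm_const_smul]
      exact mul_le_mul' (le_of_eq (Real.enorm_eq_ofReal hK0.le)) (eLpNorm_mono_measure f hμt_le)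
    set φ : ℝ → ℝ := fun s => (t - s) ^ (α - 1) with hφ_def
    have hφm : AEStronglyMeasurable φ μt := by
      have : Measurable φ := by rw [hφ_def]; fun_prop
      exact this.aestronglyMeasurable
    have hold : eLpNorm (fun s => φ s • g s) 1 μt ≤ eLpNorm φ q μt * eLpNorm g p μt :=
      by haveI : ENNReal.HolderTriple q p 1 := ⟨by simpa [one_div] using hpq1.symm⟩; exact eLpNorm_smul_le_mul_eLpNorm hgm hφm
    have hbound : eLpNorm (fun s => φ s • g s) 1 μt ≤
        Bq * (ENNReal.ofReal K * eLpNorm f p μT) := by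
      refine hold.trans (mul_le_mul' ?_ hg_p)
      exact hker t ht
    have hRtop : Bq * (ENNReal.ofReal K * eLpNorm f p μT) ≠ ⊤ :=
      ENNReal.mul_ne_top hBq_top (ENNReal.mul_ne_top ENNReal.ofReal_ne_top hfp)
    have hfin : eLpNorm (fun s => φ s • g s) 1 μt ≠ ⊤ := ne_top_of_le_ne_top hRtop hbound
    have hsm : AEStronglyMeasurable (fun s => φ s • g s) μt := hφm.smul hgm
    have hint : IntegrableOn (fun s : ℝ => ((t - s) ^ (α - 1) : ℝ) • S' (t - s) (f s))
        (Set.Ioc (0 : ℝ) t) volume := by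
      have hmem : MemLp (fun s => φ s • g s) 1 μt := ⟨hsm, lt_top_iff_ne_top.2 hfin⟩
      exact memLp_one_iff_integrable.1 hmem
    refine ⟨hint, ?_⟩
    have h1 : ‖∫ s in Set.Ioc (0:ℝ) t, φ s • g s‖ ≤
        (eLpNorm (fun s => φ s • g s) 1 μt).toReal := by
      rw [eLpNorm_one_eq_lintegral_enorm]
      refine (norm_integral_le_lintegral_norm _).trans ?_
      apply le_of_eq; congr 1
      apply lintegral_congr; intro s; rw [ofReal_norm]
    exact h1.trans (ENNReal.toReal_mono hRtop hbound)
  -- Key lemma B: continuity for continuous compactly supported data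
  have keyB : ∀ g : ℝ → H, Continuous g → HasCompactSupport g →
      ContinuousOn
        (fun t : ℝ => ∫ s in Set.Ioc (0 : ℝ) t, ((t - s) ^ (α - 1) : ℝ) • S' (t - s) (g s))
        (Set.Icc (0 : ℝ) T) := by
    intro g hg hgsupp
    obtain ⟨C₀, hC₀⟩ := hg.bounded_above_of_compact_support hgsupp
    have hC₀0 : 0 ≤ C₀ := le_trans (norm_nonneg (g 0)) (hC₀ 0)
    set F : ℝ → ℝ → H := fun t u =>
      (Set.Ioc (0:ℝ) t).indicator (fun u => (u ^ (α - 1) : ℝ) • S' u (g (t - u))) u with hF_def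
    have step1 : ∀ t ∈ Set.Icc (0:ℝ) T,
        (∫ s in Set.Ioc (0 : ℝ) t, ((t - s) ^ (α - 1) : ℝ) • S' (t - s) (g s)) =
          ∫ u in Set.Ioc (0:ℝ) T, F t u := by
      intro t ht
      have h1 : (∫ s in Set.Ioc (0 : ℝ) t, ((t - s) ^ (α - 1) : ℝ) • S' (t - s) (g s)) =
          ∫ s in (0:ℝ)..t, ((t - s) ^ (α - 1) : ℝ) • S' (t - s) (g s) :=
        (intervalIntegral.integral_of_le ht.1).symm
      have h2 : (∫ s in (0:ℝ)..t, ((t - s) ^ (α - 1) : ℝ) • S' (t - s) (g s)) =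
          ∫ u in (0:ℝ)..t, (u ^ (α - 1) : ℝ) • S' u (g (t - u)) := by
        have h := intervalIntegral.integral_comp_sub_left
          (a := 0) (b := t) (fun u : ℝ => (u ^ (α - 1) : ℝ) • S' u (g (t - u))) t
        simp only [sub_sub_cancel] at h
        rw [h, sub_self, sub_zero]
      have h3 : (∫ u in (0:ℝ)..t, (u ^ (α - 1) : ℝ) • S' u (g (t - u))) =
          ∫ u in Set.Ioc (0:ℝ) t, (u ^ (α - 1) : ℝ) • S' u (g (t - u)) :=
        intervalIntegral.integral_of_le ht.1
      have h4 : (∫ u in Set.Ioc (0:ℝ) T, F t u) =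
          ∫ u in Set.Ioc (0:ℝ) t, (u ^ (α - 1) : ℝ) • S' u (g (t - u)) := by
        rw [hF_def]
        rw [setIntegral_indicator measurableSet_Ioc,
          Set.inter_eq_self_of_subset_right (Set.Ioc_subset_Ioc_right ht.2)]
      rw [h1, h2, h3, ← h4]
    have step2 : ContinuousOn (fun t => ∫ u in Set.Ioc (0:ℝ) T, F t u) (Set.Icc (0:ℝ) T) := by
      intro t₀ ht₀
      have hmeas : ∀ t : ℝ, AEStronglyMeasurable (F t) μT := by
        intro t
        apply AEStronglyMeasurable.indicator _ measurableSet_Ioc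
        apply AEStronglyMeasurable.smul
        · exact (by fun_prop : Measurable fun u : ℝ => u ^ (α - 1)).aestronglyMeasurable
        · have hco : Continuous fun u : ℝ => S' u (g (t - u)) :=
            hΦ.comp (continuous_id.prodMk (hg.comp (continuous_const.sub continuous_id)))
          exact hco.aestronglyMeasurable
      have hbound : ∀ t ∈ Set.Icc (0:ℝ) T, ∀ᵐ u ∂μT, ‖F t u‖ ≤ u ^ (α - 1) * (K * C₀) := by
        intro t ht
        rw [hμT_def, ae_restrict_iff' measurableSet_Ioc]
        refine Filter.Eventually.of_forall fun u hu => ?_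
        by_cases hu' : u ∈ Set.Ioc (0:ℝ) t
        · rw [hF_def]
          simp only [Set.indicator_of_mem hu']
          rw [norm_smul, Real.norm_eq_abs, abs_of_nonneg (Real.rpow_nonneg hu.1.le _)]
          apply mul_le_mul_of_nonneg_left _ (Real.rpow_nonneg hu.1.le _)
          calc ‖S' u (g (t - u))‖ ≤ ‖S' u‖ * ‖g (t - u)‖ := (S' u).le_opNorm _
            _ ≤ K * C₀ := mul_le_mul (hS'b u hu.2) (hC₀ _) (norm_nonneg _) hK0.le
        · rw [hF_def]
          simp only [Set.indicator_of_notMem hu', norm_zero]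
          exact mul_nonneg (Real.rpow_nonneg hu.1.le _) (by positivity)
      have hbint : Integrable (fun u : ℝ => u ^ (α - 1) * (K * C₀)) μT := by
        rw [hμT_def]
        exact (aux_kernelInt (by linarith : (-1:ℝ) < α - 1) hT.le).mul_const _
      have hlim : ∀ᵐ u ∂μT,
          Tendsto (fun t => F t u) (𝓝[Set.Icc (0:ℝ) T] t₀) (𝓝 (F t₀ u)) := by
        have hae1 : ∀ᵐ u ∂μT, u ∈ Set.Ioc (0:ℝ) T := by
          rw [hμT_def]; exact ae_restrict_mem measurableSet_Ioc
        have hae2 : ∀ᵐ u ∂μT, u ≠ t₀ := by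
          rw [hμT_def]
          refine ae_restrict_of_ae ?_
          rw [ae_iff]
          have hsing : {u : ℝ | ¬u ≠ t₀} = {t₀} := by ext u; simp
          rw [hsing]
          exact measure_singleton t₀
        filter_upwards [hae1, hae2] with u hu hne
        rcases lt_or_gt_of_ne hne with hlt | hgt
        · have hev : ∀ᶠ t in 𝓝[Set.Icc (0:ℝ) T] t₀, u < t :=
            eventually_nhdsWithin_of_eventually_nhds (eventually_gt_nhds hlt)
          have hcont : Tendsto (fun t => (u ^ (α - 1) : ℝ) • S' u (g (t - u)))
              (𝓝[Set.Icc (0:ℝ) T] t₀) (𝓝 ((u ^ (α - 1) : ℝ) • S' u (g (t₀ - u)))) := by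
            have hc : Continuous fun t : ℝ => (u ^ (α - 1) : ℝ) • S' u (g (t - u)) :=
              ((S' u).continuous.comp (hg.comp (continuous_id.sub continuous_const))).const_smul _
            exact (hc.tendsto t₀).mono_left nhdsWithin_le_nhds
          have heq : (fun t => (u ^ (α - 1) : ℝ) • S' u (g (t - u)))
              =ᶠ[𝓝[Set.Icc (0:ℝ) T] t₀] fun t => F t u := by
            filter_upwards [hev] with t htu
            rw [hF_def]
            simp only [Set.indicator_of_mem (Set.mem_Ioc.2 ⟨hu.1, htu.le⟩)]
          have hFt₀ : F t₀ u = (u ^ (α - 1) : ℝ) • S' u (g (t₀ - u)) := by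
            rw [hF_def]
            simp only [Set.indicator_of_mem (Set.mem_Ioc.2 ⟨hu.1, hlt.le⟩)]
          rw [hFt₀]
          exact hcont.congr' heq
        · have hev : ∀ᶠ t in 𝓝[Set.Icc (0:ℝ) T] t₀, t < u :=
            eventually_nhdsWithin_of_eventually_nhds (eventually_lt_nhds hgt)
          have hFt₀ : F t₀ u = 0 := by
            rw [hF_def]
            apply Set.indicator_of_notMem
            intro hmem
            exact absurd hmem.2 (not_le.2 hgt)
          have heq : (fun _ : ℝ => (0 : H)) =ᶠ[𝓝[Set.Icc (0:ℝ) T] t₀] fun t => F t u := by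
            filter_upwards [hev] with t htu
            rw [hF_def]
            symm
            apply Set.indicator_of_notMem
            intro hmem
            exact absurd hmem.2 (not_le.2 htu)
          rw [hFt₀]
          exact tendsto_const_nhds.congr' heq
      exact tendsto_integral_filter_of_dominated_convergence
        (fun u => u ^ (α - 1) * (K * C₀))
        (Filter.Eventually.of_forall hmeas)
        (by filter_upwards [self_mem_nhdsWithin] with t ht using hbound t ht)
        hbint hlim
    exact step2.congr step1
  -- y is in L^p
  have hy_p : eLpNorm y p μT ≠ ⊤ := by
    rw [eLpNorm_eq_lintegral_rpow_enorm_toReal hp0 hptop, hp_toReal]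
    have hcongr : ∫⁻ s, (‖y s‖₊ : ℝ≥0∞) ^ pr ∂μT = ∫⁻ s, (‖y s‖₊ : ℝ≥0∞) ^ (2 * m) ∂μT := by
      apply lintegral_congr
      intro s
      rw [show pr = ((2 * m : ℕ) : ℝ) by rw [hpr_def]; push_cast; ring, ENNReal.rpow_natCast]
    refine ENNReal.rpow_ne_top_of_nonneg (by positivity) ?_
    exact hcongr.trans_ne hyLp
  -- Part 1
  have part1 : ∀ t ∈ Set.Icc (0:ℝ) T,
      IntegrableOn (fun s : ℝ => ((t - s) ^ (α - 1) : ℝ) • S (t - s) (y s))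
        (Set.Ioc (0 : ℝ) t) volume := by
    intro t ht
    refine ((keyA y hymeas hy_p t ht).1).congr_fun ?_ measurableSet_Ioc
    intro s hs
    have : max (t - s) 0 = t - s := max_eq_left (by linarith [hs.2])
    simp only [hS'_def, this]
  refine ⟨part1, ?_⟩
  -- Part 2: a globally defined representative of `y`
  set Y : ℝ → H := (Set.Ioc (0:ℝ) T).indicator (hymeas.mk y) with hY_def
  have hY_sm : StronglyMeasurable Y := hymeas.stronglyMeasurable_mk.indicator measurableSet_Ioc
  have hY_eq : Y =ᵐ[μT] y := by
    have h1 : Y =ᵐ[μT] hymeas.mk y := by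
      have hmem : ∀ᵐ s ∂μT, s ∈ Set.Ioc (0:ℝ) T := by
        rw [hμT_def]; exact ae_restrict_mem measurableSet_Ioc
      filter_upwards [hmem] with s hs
      exact Set.indicator_of_mem hs _
    exact h1.trans hymeas.ae_eq_mk.symm
  have hY_p : eLpNorm Y p μT ≠ ⊤ := by
    rw [eLpNorm_congr_ae hY_eq]; exact hy_p
  have hY_mem : MemLp Y p volume := by
    refine ⟨hY_sm.aestronglyMeasurable, ?_⟩
    rw [hY_def, eLpNorm_indicator_eq_eLpNorm_restrict measurableSet_Ioc, ← hμT_def,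
      eLpNorm_congr_ae hymeas.ae_eq_mk.symm]
    exact lt_top_iff_ne_top.2 hy_p
  -- the approximating sequence of continuous compactly supported functions
  have happrox : ∀ n : ℕ, ∃ gn : ℝ → H, HasCompactSupport gn ∧
      eLpNorm (Y - gn) p volume ≤ ENNReal.ofReal (1 / (n + 1)) ∧ Continuous gn ∧
      MemLp gn p volume := by
    intro n
    exact hY_mem.exists_hasCompactSupport_eLpNorm_sub_le hptop
      (ENNReal.ofReal_pos.2 (by positivity)).ne'
  choose g hg1 hg2 hg3 hg4 using happrox
  have hgm : ∀ n, AEStronglyMeasurable (g n) μT := fun n => (hg3 n).aestronglyMeasurable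
  have hgp : ∀ n, eLpNorm (g n) p μT ≠ ⊤ := fun n =>
    ne_top_of_le_ne_top (hg4 n).2.ne
      (by rw [hμT_def]; exact eLpNorm_mono_measure _ Measure.restrict_le_self)
  have hYgm : ∀ n, AEStronglyMeasurable (fun s => Y s - g n s) μT := fun n =>
    (hY_sm.aestronglyMeasurable).sub (hgm n)
  have hYgp : ∀ n, eLpNorm (fun s => Y s - g n s) p μT ≤ ENNReal.ofReal (1 / (n + 1)) := by
    intro n
    refine le_trans ?_ (hg2 n)
    rw [hμT_def]
    exact eLpNorm_mono_measure _ Measure.restrict_le_self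
  set Z : (ℝ → H) → ℝ → H := fun f t =>
    ∫ s in Set.Ioc (0:ℝ) t, ((t - s) ^ (α - 1) : ℝ) • S' (t - s) (f s) with hZ_def
  have hdiff : ∀ n, ∀ t ∈ Set.Icc (0:ℝ) T,
      Z (fun s => Y s - g n s) t = Z Y t - Z (g n) t := by
    intro n t ht
    have hiY := (keyA Y hY_sm.aestronglyMeasurable hY_p t ht).1
    have hig := (keyA (g n) (hgm n) (hgp n) t ht).1
    rw [hZ_def]
    simp only
    rw [← integral_sub hiY hig]
    apply integral_congr_ae
    refine Filter.Eventually.of_forall fun s => ?_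
    simp [map_sub, smul_sub]
  have hZbound : ∀ n, ∀ t ∈ Set.Icc (0:ℝ) T,
      ‖Z Y t - Z (g n) t‖ ≤
        (Bq * (ENNReal.ofReal K * ENNReal.ofReal (1 / (n + 1)))).toReal := by
    intro n t ht
    rw [← hdiff n t ht]
    refine le_trans
      ((keyA _ (hYgm n) (ne_top_of_le_ne_top ENNReal.ofReal_ne_top (hYgp n)) t ht).2) ?_
    apply ENNReal.toReal_mono
    · exact ENNReal.mul_ne_top hBq_top
        (ENNReal.mul_ne_top ENNReal.ofReal_ne_top ENNReal.ofReal_ne_top)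
    · exact mul_le_mul' le_rfl (mul_le_mul' le_rfl (hYgp n))
  have hunif : TendstoUniformlyOn (fun n t => Z (g n) t) (Z Y) atTop (Set.Icc (0:ℝ) T) := by
    rw [Metric.tendstoUniformlyOn_iff]
    intro ε hε
    have htend : Tendsto (fun n : ℕ => Bq.toReal * K * (1 / (n + 1))) atTop (𝓝 0) := by
      have h0 := tendsto_one_div_add_atTop_nhds_zero_nat (𝕜 := ℝ)
      have h1 := h0.const_mul (Bq.toReal * K)
      simpa using h1
    filter_upwards [htend.eventually_lt_const hε] with n hn t ht
    rw [dist_eq_norm]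
    refine lt_of_le_of_lt (hZbound n t ht) (lt_of_le_of_lt ?_ hn)
    rw [ENNReal.toReal_mul, ENNReal.toReal_mul, ENNReal.toReal_ofReal hK0.le,
      ENNReal.toReal_ofReal (by positivity)]
    exact le_of_eq (mul_assoc _ _ _).symm
  have hZcont : ContinuousOn (Z Y) (Set.Icc (0:ℝ) T) := by
    apply hunif.continuousOn
    exact (Filter.Eventually.of_forall fun n => keyB (g n) (hg3 n) (hg1 n)).frequently
  refine hZcont.congr ?_
  intro t ht
  have hae : ∀ᵐ s ∂(volume.restrict (Set.Ioc (0:ℝ) t)), Y s = y s := by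
    apply ae_restrict_of_ae_restrict_of_subset (Set.Ioc_subset_Ioc_right ht.2)
    rw [← hμT_def]
    exact hY_eq
  have hae2 := (ae_restrict_iff' measurableSet_Ioc).1 hae
  rw [hZ_def]
  simp only
  apply setIntegral_congr_ae measurableSet_Ioc
  filter_upwards [hae2] with s hs hmem
  rw [hs hmem]
  have hmax : max (t - s) 0 = t - s := max_eq_left (by linarith [hmem.2])
  simp only [hS'_def, hmax]
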